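/- arXiv:2603.24362 — 3 statements merged into one kernel-verified Lean document; each statement's English description precedes it below -/
import Mathlib

section
/- Let n ≥ 2, let 0 < λ < Λ, let l > 0 and let Q = (−l, l)^n ⊂ ℝ^n. There do not exist μ > 0 and a twice continuously differentiable even function f : ℝ → ℝ with f(0) = 1, f > 0 on (−l, l) and f(l) = 0, such that the product function u(x₁,…,xₙ) = ∏_{j=1}^n f(x_j) satisfies −M⁺_{λ,Λ}(Hess u(x)) = μ·u(x) for every x ∈ Q. (Equivalently: when Λ > λ, no positive product-form eigenfunction of the Pucci maximal operator exists on the cube.) -/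
/-- The Pucci maximal operator `M⁺_{λ,Λ}` of a symmetric matrix:
`Σᵢ (Λ·max(eᵢ,0) + λ·min(eᵢ,0))` over the eigenvalues `eᵢ` (with multiplicity). -/
noncomputable def pucci (lam Lam : ℝ) {n : Type*} [Fintype n] [DecidableEq n]
    (A : Matrix n n ℝ) : ℝ :=
  if h : A.IsHermitian then
    ∑ i, (Lam * max (h.eigenvalues i) 0 + lam * min (h.eigenvalues i) 0)
  else 0

/-- Partial derivative of `u : ℝⁿ → ℝ` in the `i`-th coordinate direction. -/
noncomputable def pderiv' {n : ℕ} (i : Fin n) (u : (Fin n → ℝ) → ℝ) :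
    (Fin n → ℝ) → ℝ :=
  fun x => deriv (fun t => u (Function.update x i t)) (x i)

/-- The Hessian matrix of second partial derivatives of `u : ℝⁿ → ℝ`. -/
noncomputable def hessN {n : ℕ} (u : (Fin n → ℝ) → ℝ) (x : Fin n → ℝ) :
    Matrix (Fin n) (Fin n) ℝ :=
  Matrix.of fun i j => pderiv' i (pderiv' j u) x

open Finset Matrix


-- trace = sum of eigenvalues, real case
lemma eig_sum {N : Type*} [Fintype N] [DecidableEq N] {A : Matrix N N ℝ} (h : A.IsHermitian) :
    ∑ i, h.eigenvalues i = A.trace := by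
  conv_rhs => rw [h.spectral_theorem, Unitary.conjStarAlgAut_apply]
  rw [Matrix.trace_mul_comm, ← mul_assoc, Unitary.coe_star_mul_self, one_mul,
    Matrix.trace_diagonal]
  simp

-- quadratic form bound
lemma quad_bound {N : Type*} [Fintype N] [DecidableEq N] {A : Matrix N N ℝ} (h : A.IsHermitian)
    (v : N → ℝ) :
    abs (v ⬝ᵥ (A *ᵥ v)) ≤ (∑ i, |h.eigenvalues i|) * (v ⬝ᵥ v) := by
  set U : Matrix N N ℝ := (h.eigenvectorUnitary : Matrix N N ℝ) with hU
  set w : N → ℝ := star U *ᵥ v with hw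
  have key : ∀ z : N → ℝ, v ⬝ᵥ (U *ᵥ z) = w ⬝ᵥ z := by
    intro z
    rw [Matrix.dotProduct_mulVec, hw]
    congr 1
    rw [Matrix.star_eq_conjTranspose, Matrix.conjTranspose_eq_transpose_of_trivial,
      Matrix.mulVec_transpose]
  have hAv : A *ᵥ v = U *ᵥ (Matrix.diagonal (RCLike.ofReal ∘ h.eigenvalues) *ᵥ w) := by
    conv_lhs => rw [h.spectral_theorem, Unitary.conjStarAlgAut_apply]
    rw [← Matrix.mulVec_mulVec, ← Matrix.mulVec_mulVec]
  have h1 : v ⬝ᵥ (A *ᵥ v) = ∑ i, w i * (h.eigenvalues i * w i) := by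
    rw [hAv, key]
    unfold dotProduct
    refine Finset.sum_congr rfl fun i _ => ?_
    rw [Matrix.mulVec_diagonal]
    simp
  have h2 : v ⬝ᵥ v = w ⬝ᵥ w := by
    have : v ⬝ᵥ v = v ⬝ᵥ ((U * star U) *ᵥ v) := by
      rw [Matrix.mem_unitaryGroup_iff.mp h.eigenvectorUnitary.2, Matrix.one_mulVec]
    rw [this, ← Matrix.mulVec_mulVec, key]
  have hWnn : ∀ i : N, w i * w i ≤ w ⬝ᵥ w := by
    intro i
    have : ∀ j : N, 0 ≤ w j * w j := fun j => mul_self_nonneg _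
    exact Finset.single_le_sum (fun j _ => this j) (mem_univ i)
  calc abs (v ⬝ᵥ (A *ᵥ v)) = abs (∑ i, w i * (h.eigenvalues i * w i)) := by rw [h1]
    _ ≤ ∑ i, |w i * (h.eigenvalues i * w i)| := Finset.abs_sum_le_sum_abs _ _
    _ ≤ ∑ i, |h.eigenvalues i| * (w ⬝ᵥ w) := by
        refine Finset.sum_le_sum fun i _ => ?_
        rw [show w i * (h.eigenvalues i * w i) = h.eigenvalues i * (w i * w i) by ring,
          abs_mul, abs_of_nonneg (mul_self_nonneg (w i))]
        exact mul_le_mul_of_nonneg_left (hWnn i) (abs_nonneg _)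
    _ = (∑ i, |h.eigenvalues i|) * (w ⬝ᵥ w) := by rw [Finset.sum_mul]
    _ = (∑ i, |h.eigenvalues i|) * (v ⬝ᵥ v) := by rw [h2]


lemma pucci_of_herm {lam Lam : ℝ} {N : Type*} [Fintype N] [DecidableEq N]
    {A : Matrix N N ℝ} (h : A.IsHermitian) :
    pucci lam Lam A = ∑ i, (Lam * max (h.eigenvalues i) 0 + lam * min (h.eigenvalues i) 0) := by
  rw [pucci, dif_pos h]

lemma g_split (lam Lam x : ℝ) :
    Lam * max x 0 + lam * min x 0 = (Lam + lam)/2 * x + (Lam - lam)/2 * |x| := by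
  rcases le_or_gt 0 x with hx | hx
  · rw [max_eq_left hx, min_eq_right hx, abs_of_nonneg hx]; ring
  · rw [max_eq_right hx.le, min_eq_left hx.le, abs_of_neg hx]; ring

lemma two_valued {N : ℕ} (g : ℝ → ℝ) (e : Fin N → ℝ) (p q : ℝ)
    (he : ∀ i, e i = p ∨ e i = q) (hs : ∑ i, e i = p + ((N : ℝ) - 1) * q) :
    ∑ i, g (e i) = g p + ((N : ℝ) - 1) * g q := by
  by_cases hpq : p = q
  · subst hpq
    have : ∀ i, e i = p := fun i => (he i).elim id id
    rw [Finset.sum_congr rfl fun i _ => congrArg g (this i), Finset.sum_const]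
    simp only [card_univ, Fintype.card_fin, nsmul_eq_mul]
    ring
  · have hpq' : p - q ≠ 0 := sub_ne_zero.mpr hpq
    set r : ℝ := (g p - g q)/(p - q) with hr
    have key : ∀ i, g (e i) = g q + (e i - q) * r := by
      intro i
      rcases he i with h | h <;> rw [h]
      · rw [hr]; field_simp; ring
      · simp
    rw [Finset.sum_congr rfl fun i _ => key i, Finset.sum_add_distrib, Finset.sum_const,
      ← Finset.sum_mul]
    have : ∑ i, (e i - q) = p - q := by
      rw [Finset.sum_sub_distrib, hs, Finset.sum_const]
      simp only [card_univ, Fintype.card_fin, nsmul_eq_mul]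
      ring
    rw [this, hr]
    simp only [card_univ, Fintype.card_fin, nsmul_eq_mul]
    field_simp
    ring

-- needs eig_sum from a.lean; inline import assumption via axiom for test? just copy later.

lemma sum_split2 {N : ℕ} (hn : 2 ≤ N) (F : Fin N → ℝ) (i0 i1 : Fin N) (hne : i0 ≠ i1)
    (c : ℝ) (hc : ∀ k, k ≠ i0 → k ≠ i1 → F k = c) :
    ∑ k, F k = F i0 + F i1 + ((N : ℝ) - 2) * c := by
  have h1 : ∑ k, F k = F i0 + ∑ k ∈ univ.erase i0, F k :=
    (Finset.add_sum_erase univ F (mem_univ i0)).symm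
  have hi1 : i1 ∈ univ.erase i0 := by
    rw [Finset.mem_erase]; exact ⟨hne.symm, mem_univ i1⟩
  have h2 : ∑ k ∈ univ.erase i0, F k = F i1 + ∑ k ∈ (univ.erase i0).erase i1, F k :=
    (Finset.add_sum_erase _ F hi1).symm
  have h3 : ∑ k ∈ (univ.erase i0).erase i1, F k = ((N : ℝ) - 2) * c := by
    have := Finset.sum_congr rfl (fun k hk => by
      rw [Finset.mem_erase, Finset.mem_erase] at hk
      exact hc k hk.2.1 hk.1 : ∀ k ∈ (univ.erase i0).erase i1, F k = c)
    rw [this, Finset.sum_const]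
    rw [Finset.card_erase_of_mem hi1, Finset.card_erase_of_mem (mem_univ i0), card_univ,
      Fintype.card_fin, nsmul_eq_mul]
    have : ((N - 1 - 1 : ℕ) : ℝ) = (N : ℝ) - 2 := by
      have : (2 : ℕ) ≤ N := hn
      push_cast [Nat.cast_sub (by omega : 1 ≤ N - 1), Nat.cast_sub (by omega : 1 ≤ N)]
      ring
    rw [this]
  rw [h1, h2, h3]; ring

lemma sum_split1 {N : ℕ} (hn : 1 ≤ N) (F : Fin N → ℝ) (i0 : Fin N)
    (c : ℝ) (hc : ∀ k, k ≠ i0 → F k = c) :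
    ∑ k, F k = F i0 + ((N : ℝ) - 1) * c := by
  have h1 : ∑ k, F k = F i0 + ∑ k ∈ univ.erase i0, F k :=
    (Finset.add_sum_erase univ F (mem_univ i0)).symm
  have h3 : ∑ k ∈ univ.erase i0, F k = ((N : ℝ) - 1) * c := by
    rw [Finset.sum_congr rfl (fun k hk => hc k (Finset.mem_erase.mp hk).1), Finset.sum_const,
      Finset.card_erase_of_mem (mem_univ i0), card_univ, Fintype.card_fin, nsmul_eq_mul]
    rw [Nat.cast_sub (by omega : 1 ≤ N)]
    norm_num
  rw [h1, h3]

lemma pucci_diag {lam Lam : ℝ} {N : ℕ} (hn : 1 ≤ N) (i0 : Fin N) (p q : ℝ) :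
    pucci lam Lam (Matrix.diagonal (fun i => if i = i0 then p else q)) =
      (Lam * max p 0 + lam * min p 0) + ((N : ℝ) - 1) * (Lam * max q 0 + lam * min q 0) := by
  set d : Fin N → ℝ := fun i => if i = i0 then p else q with hd
  have h : (Matrix.diagonal d).IsHermitian := Matrix.isHermitian_diagonal d
  rw [pucci_of_herm h]
  refine two_valued (fun x => Lam * max x 0 + lam * min x 0) h.eigenvalues p q ?_ ?_
  · intro i
    have hmem : h.eigenvalues i ∈ spectrum ℝ (Matrix.diagonal d) :=
      h.eigenvalues_mem_spectrum_real i
    rw [spectrum_diagonal] at hmem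
    obtain ⟨j, hj⟩ := hmem
    by_cases hji : j = i0
    · left; rw [← hj, hd]; simp [hji]
    · right; rw [← hj, hd]; simp [hji]
  · rw [eig_sum h, Matrix.trace_diagonal]
    rw [sum_split1 hn d i0 q (fun k hk => by simp [hd, hk])]
    simp [hd]
variable {f : ℝ → ℝ}

lemma prod_f_update {n : ℕ} (g : Fin n → ℝ) (i : Fin n) (t : ℝ) (s : Finset (Fin n))
    (his : i ∈ s) :
    ∏ k ∈ s, f (Function.update g i t k) = f t * ∏ k ∈ s.erase i, f (g k) := by
  have h1 : ∀ k, f (Function.update g i t k) = Function.update (fun k => f (g k)) i (f t) k := by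
    intro k
    by_cases hk : k = i <;> simp [Function.update_apply, hk]
  rw [Finset.prod_congr rfl (fun k _ => h1 k), Finset.prod_update_of_mem his,
    Finset.sdiff_singleton_eq_erase]

lemma prod_f_update_ne {n : ℕ} (g : Fin n → ℝ) (i : Fin n) (t : ℝ) (s : Finset (Fin n))
    (his : i ∉ s) :
    ∏ k ∈ s, f (Function.update g i t k) = ∏ k ∈ s, f (g k) := by
  refine Finset.prod_congr rfl fun k hk => ?_
  have : k ≠ i := fun h => his (by rwa [h] at hk)
  rw [Function.update_of_ne this _ _]

lemma pderiv_prod {n : ℕ} (hf : ContDiff ℝ 2 f) (j : Fin n) (x : Fin n → ℝ) :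
    pderiv' j (fun y => ∏ k, f (y k)) x = deriv f (x j) * ∏ k ∈ univ.erase j, f (x k) := by
  rw [pderiv']
  have h1 : (fun t => ∏ k, f (Function.update x j t k)) =
      fun t => f t * ∏ k ∈ univ.erase j, f (x k) := by
    funext t
    rw [prod_f_update x j t univ (mem_univ j)]
  rw [h1, deriv_mul_const ((hf.differentiable (by norm_num)).differentiableAt)]

lemma pderiv_pderiv_prod {n : ℕ} (hf : ContDiff ℝ 2 f) (i j : Fin n) (x : Fin n → ℝ) :
    pderiv' i (pderiv' j (fun y => ∏ k, f (y k))) x =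
      if i = j then deriv (deriv f) (x i) * ∏ k ∈ univ.erase i, f (x k)
      else deriv f (x i) * deriv f (x j) * ∏ k ∈ (univ.erase j).erase i, f (x k) := by
  have hdf : Differentiable ℝ f := hf.differentiable (by norm_num)
  have hdf2 : Differentiable ℝ (deriv f) := by
    have h2 : ContDiff ℝ (1+1) f := by
      rw [one_add_one_eq_two]; exact hf
    exact (contDiff_succ_iff_deriv.mp h2).2.2.differentiable one_ne_zero
  have hrw : pderiv' j (fun y => ∏ k, f (y k)) =
      fun y => deriv f (y j) * ∏ k ∈ univ.erase j, f (y k) := by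
    funext y; exact pderiv_prod hf j y
  rw [hrw, pderiv']
  by_cases hij : i = j
  · subst hij
    have h1 : (fun t => deriv f (Function.update x i t i) *
        ∏ k ∈ univ.erase i, f (Function.update x i t k)) =
        fun t => deriv f t * ∏ k ∈ univ.erase i, f (x k) := by
      funext t
      rw [Function.update_self, prod_f_update_ne x i t _ (Finset.notMem_erase i univ)]
    simp only [h1]
    rw [deriv_mul_const (hdf2.differentiableAt)]
    simp
  · have hi_mem : i ∈ univ.erase j := Finset.mem_erase.mpr ⟨hij, mem_univ i⟩
    have h1 : (fun t => deriv f (Function.update x i t j) *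
        ∏ k ∈ univ.erase j, f (Function.update x i t k)) =
        fun t => f t * (deriv f (x j) * ∏ k ∈ (univ.erase j).erase i, f (x k)) := by
      funext t
      rw [Function.update_of_ne (Ne.symm hij), prod_f_update x i t _ hi_mem]
      ring
    simp only [h1]
    rw [deriv_mul_const (hdf.differentiableAt), if_neg hij]
    ring

lemma hess_prod {n : ℕ} (hf : ContDiff ℝ 2 f) (x : Fin n → ℝ) (i j : Fin n) :
    hessN (fun y => ∏ k, f (y k)) x i j =
      if i = j then deriv (deriv f) (x i) * ∏ k ∈ univ.erase i, f (x k)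
      else deriv f (x i) * deriv f (x j) * ∏ k ∈ (univ.erase j).erase i, f (x k) :=
  pderiv_pderiv_prod hf i j x

lemma pucci_split {lam Lam : ℝ} {N : Type*} [Fintype N] [DecidableEq N]
    {A : Matrix N N ℝ} (h : A.IsHermitian) :
    pucci lam Lam A = (Lam + lam)/2 * A.trace + (Lam - lam)/2 * ∑ i, |h.eigenvalues i| := by
  rw [pucci_of_herm h, ← eig_sum h, Finset.mul_sum, Finset.mul_sum, ← Finset.sum_add_distrib]
  exact Finset.sum_congr rfl fun i _ => g_split lam Lam _

set_option maxHeartbeats 2000000 in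
/-- Non-separability on cubes: if `0 < λ < Λ` there is no positive product-form
eigenfunction of the Pucci maximal operator on the cube `(−l, l)ⁿ`, `n ≥ 2`. -/
theorem nonseparability_on_cubes {n : ℕ} (hn : 2 ≤ n) (lam Lam l : ℝ)
    (hlam : 0 < lam) (hLam : lam < Lam) (hl : 0 < l) :
    ¬ ∃ (μ : ℝ) (f : ℝ → ℝ), 0 < μ ∧ ContDiff ℝ 2 f ∧ (∀ t : ℝ, f (-t) = f t) ∧
      f 0 = 1 ∧ (∀ t ∈ Set.Ioo (-l) l, 0 < f t) ∧ f l = 0 ∧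
      (∀ x : Fin n → ℝ, (∀ j, x j ∈ Set.Ioo (-l) l) →
        -pucci lam Lam (hessN (fun y => ∏ j, f (y j)) x) = μ * ∏ j, f (x j)) := by
  rintro ⟨μ, f, hμ, hf2, heven, hf0, hfpos, hfl, heq⟩
  have hLlam : 0 < Lam := hlam.trans hLam
  have hdf : Differentiable ℝ f := hf2.differentiable (by norm_num)
  have hdf2 : Differentiable ℝ (deriv f) := by
    have h2 : ContDiff ℝ (1+1) f := by rw [one_add_one_eq_two]; exact hf2
    exact (contDiff_succ_iff_deriv.mp h2).2.2.differentiable one_ne_zero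
  set F2 : ℝ → ℝ := deriv (deriv f) with hF2
  have hf'0 : deriv f 0 = 0 := by
    have h1 : (fun s => f (-s)) = f := funext heven
    have h2 : deriv f 0 = - deriv f 0 := by
      conv_lhs => rw [← h1]
      rw [deriv_comp_neg, neg_zero]
    linarith
  set i0 : Fin n := ⟨0, by omega⟩ with hi0
  set i1 : Fin n := ⟨1, by omega⟩ with hi1
  have hne : i0 ≠ i1 := by simp [hi0, hi1, Fin.ext_iff]
  have h0mem : (0 : ℝ) ∈ Set.Ioo (-l) l := by constructor <;> linarith
  -- the one-parameter family of points
  set xt : ℝ → (Fin n → ℝ) := fun t => Function.update (fun _ => (0:ℝ)) i0 t with hxt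
  have hxtapp : ∀ t, xt t = Function.update (fun _ => (0:ℝ)) i0 t := fun t => rfl
  have hxt0 : ∀ t, xt t i0 = t := fun t => Function.update_self _ _ _
  have hxtk : ∀ t k, k ≠ i0 → xt t k = 0 := fun t k hk => Function.update_of_ne hk _ _
  -- product of f over constant-0 function is 1
  have hone : ∀ s : Finset (Fin n), ∏ k ∈ s, f ((fun _ : Fin n => (0:ℝ)) k) = 1 :=
    fun s => Finset.prod_eq_one (fun k _ => hf0)
  -- hessian at xt is diagonal
  have hxdiag : ∀ t, hessN (fun y => ∏ j, f (y j)) (xt t) =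
      Matrix.diagonal (fun i => if i = i0 then F2 t else F2 0 * f t) := by
    intro t
    ext i j
    rw [show hessN (fun y => ∏ j, f (y j)) (xt t) i j =
      hessN (fun y => ∏ k, f (y k)) (xt t) i j from rfl, hess_prod hf2]
    by_cases hij : i = j
    · subst hij
      rw [if_pos rfl, Matrix.diagonal_apply_eq]
      by_cases hii : i = i0
      · subst hii
        rw [if_pos rfl, hxt0, hxtapp t, prod_f_update_ne _ _ _ _ (Finset.notMem_erase i0 univ),
          hone, mul_one]
      · rw [if_neg hii, hxtk t i hii, hxtapp t,
          prod_f_update _ _ _ _ (Finset.mem_erase.mpr ⟨Ne.symm hii, mem_univ i0⟩),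
          hone]
        ring
    · rw [if_neg hij, Matrix.diagonal_apply_ne _ hij]
      rcases eq_or_ne i i0 with hii | hii
      · have hj : j ≠ i0 := fun h => hij (by rw [hii, h])
        rw [hxtk t j hj, hf'0]; ring
      · rw [hxtk t i hii, hf'0]; ring
  -- product value at xt
  have hprodxt : ∀ t, ∏ j, f (xt t j) = f t := by
    intro t
    rw [hxtapp t, prod_f_update _ _ _ _ (mem_univ i0), hone, mul_one]
  -- the main 1-d identity
  have hkey : ∀ t ∈ Set.Ioo (-l) l,
      (Lam * max (F2 t) 0 + lam * min (F2 t) 0)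
        + ((n : ℝ) - 1) * (Lam * max (F2 0 * f t) 0 + lam * min (F2 0 * f t) 0)
        = -(μ * f t) := by
    intro t ht
    have hcoord : ∀ j, xt t j ∈ Set.Ioo (-l) l := by
      intro j
      by_cases hj : j = i0
      · rw [hj, hxt0]; exact ht
      · rw [hxtk t j hj]; exact h0mem
    have := heq (xt t) hcoord
    rw [hxdiag t, hprodxt t, pucci_diag (by omega : 1 ≤ n) i0 (F2 t) (F2 0 * f t)] at this
    linarith
  -- value of F2 0
  have hn0 : (0:ℝ) < n := by positivity
  set ω2 : ℝ := μ / (n * lam) with hω2def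
  have hω2 : 0 < ω2 := by
    apply div_pos hμ; positivity
  have hμval : μ = n * lam * ω2 := by
    rw [hω2def]; field_simp
  have hF20 : F2 0 = -ω2 := by
    have h := hkey 0 h0mem
    rw [hf0, mul_one] at h
    -- h : g c + (n-1) g c = -μ
    rcases le_or_gt 0 (F2 0) with hc | hc
    · rw [max_eq_left hc, min_eq_right hc, mul_zero, add_zero] at h
      nlinarith [mul_nonneg hLlam.le hc]
    · rw [max_eq_right hc.le, min_eq_left hc.le, mul_zero, zero_add] at h
      have h' : (n:ℝ) * lam * F2 0 = -μ := by ring_nf at h ⊢; linarith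
      have hnl : (n:ℝ) * lam ≠ 0 := by positivity
      rw [hω2def]
      field_simp
      linear_combination h'
  -- the ODE
  have hODE : ∀ t ∈ Set.Ioo (-l) l, F2 t = -ω2 * f t := by
    intro t ht
    have h := hkey t ht
    have hft : 0 < f t := hfpos t ht
    have hq : F2 0 * f t < 0 := by rw [hF20]; nlinarith
    rw [max_eq_right hq.le, min_eq_left hq.le, mul_zero, zero_add, hF20] at h
    -- h : g (F2 t) + (n-1) * (lam * (-ω2 * f t)) = -(μ * f t)
    have hg : Lam * max (F2 t) 0 + lam * min (F2 t) 0 = -(lam * ω2 * f t) := by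
      rw [hμval] at h; nlinarith
    rcases le_or_gt 0 (F2 t) with hc | hc
    · rw [max_eq_left hc, min_eq_right hc, mul_zero, add_zero] at hg
      nlinarith [mul_nonneg hLlam.le hc]
    · rw [max_eq_right hc.le, min_eq_left hc.le, mul_zero, zero_add] at hg
      have : lam ≠ 0 := ne_of_gt hlam
      field_simp at hg ⊢
      nlinarith
  -- energy conservation
  have henergy : ∀ t ∈ Set.Ioo 0 l, (deriv f t)^2 + ω2 * (f t)^2 = ω2 := by
    intro t ht
    set E : ℝ → ℝ := fun s => (deriv f s)^2 + ω2 * (f s)^2 with hE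
    have hEderiv : ∀ s : ℝ, HasDerivAt E (2 * deriv f s ^ 1 * F2 s + ω2 * (2 * f s ^ 1 * deriv f s)) s := by
      intro s
      exact ((hdf2 s).hasDerivAt.pow 2).add (((hdf s).hasDerivAt.pow 2).const_mul ω2)
    have hEdiff : Differentiable ℝ E := fun s => (hEderiv s).differentiableAt
    have hE'0 : ∀ s ∈ Set.Ioo (-l) l, deriv E s = 0 := by
      intro s hs
      rw [(hEderiv s).deriv, hODE s hs]
      ring
    have hconst := constant_of_derivWithin_zero (a := 0) (b := t)
      (hEdiff.differentiableOn) (fun x hx => by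
        rw [(hEdiff x).derivWithin ((uniqueDiffOn_Icc ht.1) x (Set.mem_Icc.mpr ⟨hx.1, hx.2.le⟩))]
        exact hE'0 x ⟨by linarith [hx.1], by linarith [hx.2, ht.2]⟩)
    have h2 : (deriv f t)^2 + ω2 * (f t)^2 = (deriv f 0)^2 + ω2 * (f 0)^2 :=
      hconst t (Set.mem_Icc.mpr ⟨ht.1.le, le_refl t⟩)
    rw [hf'0, hf0] at h2
    rw [h2]
    ring
  -- choose t with small f t
  obtain ⟨t, ht, hsmall⟩ : ∃ t, t ∈ Set.Ioo 0 l ∧ (n:ℝ) * (f t)^2 < 1 := by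
    have hcont : ContinuousAt f l := hdf.continuous.continuousAt
    have hε : (0:ℝ) < min 1 (1/(n:ℝ)) := by positivity
    obtain ⟨δ, hδ, hδ'⟩ := Metric.continuousAt_iff.mp hcont _ hε
    set s : ℝ := max (l/2) (l - δ/2) with hs
    have hs0 : 0 < s := lt_of_lt_of_le (by linarith : (0:ℝ) < l/2) (le_max_left _ _)
    have hsl : s < l := max_lt (by linarith) (by linarith)
    have hds : dist s l < δ := by
      rw [Real.dist_eq, abs_lt]
      have h1 : l - δ/2 ≤ s := le_max_right _ _
      constructor <;> [linarith; linarith]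
    have hfs := hδ' hds
    rw [hfl, Real.dist_eq, sub_zero] at hfs
    have h1 : |f s| < 1 := lt_of_lt_of_le hfs (min_le_left _ _)
    have h2 : |f s| < 1/(n:ℝ) := lt_of_lt_of_le hfs (min_le_right _ _)
    have h4 : (n:ℝ) * (1/(n:ℝ)) = 1 := by
      field_simp
    have h5 : |f s| * |f s| < (1/(n:ℝ)) * 1 :=
      mul_lt_mul'' h2 h1 (abs_nonneg _) (abs_nonneg _)
    refine ⟨s, ⟨hs0, hsl⟩, ?_⟩
    have h6 : (f s)^2 = |f s| * |f s| := by
      rw [pow_two, ← abs_mul_abs_self]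
    rw [h6]
    calc (n:ℝ) * (|f s| * |f s|) < (n:ℝ) * ((1/(n:ℝ)) * 1) := mul_lt_mul_of_pos_left h5 hn0
      _ = 1 := by rw [mul_one, h4]
  -- now the two-coordinate point
  have htIoo : t ∈ Set.Ioo (-l) l := ⟨by linarith [ht.1], ht.2⟩
  have hft : 0 < f t := hfpos t htIoo
  set yt : Fin n → ℝ := Function.update (xt t) i1 t with hyt
  have hyt1 : yt i1 = t := Function.update_self _ _ _
  have hyt0 : yt i0 = t := by rw [hyt, Function.update_of_ne hne, hxt0]
  have hytk : ∀ k, k ≠ i0 → k ≠ i1 → yt k = 0 := fun k hk0 hk1 => by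
    rw [hyt, Function.update_of_ne hk1, hxtk t k hk0]
  have hytapp : yt = Function.update (xt t) i1 t := rfl
  have hxtapp2 : xt t = Function.update (fun _ => (0:ℝ)) i0 t := rfl
  -- products over various index sets
  have hprodyt : ∏ j, f (yt j) = f t * f t := by
    rw [hytapp, prod_f_update _ _ _ _ (mem_univ i1), hxtapp2,
      prod_f_update _ _ _ _ (Finset.mem_erase.mpr ⟨hne, mem_univ i0⟩), hone, mul_one]
  have hprod_e0 : ∏ k ∈ univ.erase i0, f (yt k) = f t := by
    rw [hytapp, prod_f_update _ _ _ _ (Finset.mem_erase.mpr ⟨hne.symm, mem_univ i1⟩), hxtapp2,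
      prod_f_update_ne _ _ _ _
        (fun h => Finset.notMem_erase i0 univ (Finset.mem_of_mem_erase h)),
      hone, mul_one]
  have hprod_e1 : ∏ k ∈ univ.erase i1, f (yt k) = f t := by
    rw [hytapp, prod_f_update_ne _ _ _ _ (Finset.notMem_erase i1 univ), hxtapp2,
      prod_f_update _ _ _ _ (Finset.mem_erase.mpr ⟨hne, mem_univ i0⟩), hone, mul_one]
  have hprod_e01 : ∏ k ∈ (univ.erase i1).erase i0, f (yt k) = 1 := by
    rw [hytapp, prod_f_update_ne _ _ _ _
        (fun h => Finset.notMem_erase i1 univ (Finset.mem_of_mem_erase h)),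
      hxtapp2, prod_f_update_ne _ _ _ _ (Finset.notMem_erase i0 _), hone]
  have hprod_e10 : ∏ k ∈ (univ.erase i0).erase i1, f (yt k) = 1 := by
    rw [hytapp, prod_f_update_ne _ _ _ _ (Finset.notMem_erase i1 _), hxtapp2,
      prod_f_update_ne _ _ _ _
        (fun h => Finset.notMem_erase i0 univ (Finset.mem_of_mem_erase h)),
      hone]
  have hprod_ei : ∀ i, i ≠ i0 → i ≠ i1 → ∏ k ∈ univ.erase i, f (yt k) = f t * (f t * 1) := by
    intro i h0 h1
    rw [hytapp, prod_f_update _ _ _ _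
        (Finset.mem_erase.mpr ⟨fun h => h1 h.symm, mem_univ i1⟩),
      hxtapp2, prod_f_update _ _ _ _
        (Finset.mem_erase.mpr ⟨hne, Finset.mem_erase.mpr ⟨fun h => h0 h.symm, mem_univ i0⟩⟩),
      hone]
  -- the Hessian at yt
  set H : Matrix (Fin n) (Fin n) ℝ := hessN (fun y => ∏ j, f (y j)) yt with hH
  have hH00 : H i0 i0 = F2 t * f t := by
    rw [hH, hess_prod hf2, if_pos rfl, hyt0, hprod_e0]
  have hH11 : H i1 i1 = F2 t * f t := by
    rw [hH, hess_prod hf2, if_pos rfl, hyt1, hprod_e1]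
  have hHii : ∀ i, i ≠ i0 → i ≠ i1 → H i i = F2 0 * (f t * (f t * 1)) := by
    intro i h0 h1
    rw [hH, hess_prod hf2, if_pos rfl, hytk i h0 h1, hprod_ei i h0 h1]
  have hH01 : H i0 i1 = deriv f t * deriv f t * 1 := by
    rw [hH, hess_prod hf2, if_neg hne, hyt0, hyt1, hprod_e01]
  have hH10 : H i1 i0 = deriv f t * deriv f t * 1 := by
    rw [hH, hess_prod hf2, if_neg hne.symm, hyt0, hyt1, hprod_e10]
  have hherm : H.IsHermitian := by
    rw [Matrix.IsHermitian]
    ext i j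
    rw [Matrix.conjTranspose_apply, star_trivial, hH, hess_prod hf2, hess_prod hf2]
    by_cases hij : i = j
    · subst hij; rfl
    · rw [if_neg (fun h => hij h.symm), if_neg hij, Finset.erase_right_comm]
      ring
  have htr : H.trace = ∑ i, H i i := rfl
  have htrace : H.trace = F2 t * f t + (F2 t * f t) + ((n:ℝ) - 2) * (F2 0 * (f t * (f t * 1))) := by
    rw [htr, sum_split2 hn (fun i => H i i) i0 i1 hne (F2 0 * (f t * (f t * 1)))
      (fun k h0 h1 => hHii k h0 h1), hH00, hH11]
  -- the PDE at yt
  have hcoordy : ∀ j, yt j ∈ Set.Ioo (-l) l := by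
    intro j
    by_cases hj0 : j = i0
    · rw [hj0, hyt0]; exact htIoo
    · by_cases hj1 : j = i1
      · rw [hj1, hyt1]; exact htIoo
      · rw [hytk j hj0 hj1]; exact h0mem
  have heqy := heq yt hcoordy
  rw [← hH, hprodyt, pucci_split hherm, htrace] at heqy
  set S : ℝ := ∑ i, |hherm.eigenvalues i| with hS
  have hdpos : (0:ℝ) < Lam - lam := by linarith
  have hSval : S = n * ω2 * (f t * f t) := by
    have hkey2 : (Lam - lam) * S = (Lam - lam) * ((n:ℝ) * ω2 * (f t * f t)) := by
      rw [hODE t htIoo, hF20, hμval] at heqy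
      linear_combination (-2 : ℝ) * heqy
    exact mul_left_cancel₀ (ne_of_gt hdpos) hkey2
  -- the quadratic form bound
  set v : Fin n → ℝ := fun k => if k = i0 then (1:ℝ) else if k = i1 then -1 else 0 with hv
  have hv0 : v i0 = 1 := by simp [hv]
  have hv1 : v i1 = -1 := by simp [hv, Ne.symm hne]
  have hvk : ∀ k, k ≠ i0 → k ≠ i1 → v k = 0 := fun k h0 h1 => by simp [hv, h0, h1]
  have hvv : v ⬝ᵥ v = 2 := by
    have h1 : v ⬝ᵥ v = ∑ k, v k * v k := rfl
    rw [h1, sum_split2 hn (fun k => v k * v k) i0 i1 hne 0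
      (fun k h0 h1 => by simp [hvk k h0 h1]), hv0, hv1]
    ring
  have hHv : ∀ k : Fin n, (H *ᵥ v) k = H k i0 - H k i1 := by
    intro k
    have h1 : (H *ᵥ v) k = ∑ j, H k j * v j := rfl
    rw [h1, sum_split2 hn (fun j => H k j * v j) i0 i1 hne 0
      (fun j h0 h1 => by simp [hvk j h0 h1]), hv0, hv1]
    ring
  have hquadval : v ⬝ᵥ (H *ᵥ v) = 2 * (F2 t * f t - deriv f t * deriv f t) := by
    have h1 : v ⬝ᵥ (H *ᵥ v) = ∑ k, v k * (H *ᵥ v) k := rfl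
    rw [h1, sum_split2 hn (fun k => v k * (H *ᵥ v) k) i0 i1 hne 0
      (fun k h0 h1 => by simp [hvk k h0 h1]), hv0, hv1, hHv i0, hHv i1,
      hH00, hH11, hH01, hH10]
    ring
  have hbound := quad_bound hherm v
  rw [hquadval, hvv, ← hS] at hbound
  have hen := henergy t ht
  rw [pow_two, pow_two] at hen
  have hval : F2 t * f t = -(ω2 * (f t * f t)) := by rw [hODE t htIoo]; ring
  have hnonpos : 2 * (F2 t * f t - deriv f t * deriv f t) ≤ 0 := by
    rw [hval]
    have h1 : 0 ≤ ω2 * (f t * f t) := mul_nonneg hω2.le (mul_self_nonneg _)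
    linarith [mul_self_nonneg (deriv f t)]
  have habs : |2 * (F2 t * f t - deriv f t * deriv f t)| = 2 * ω2 := by
    rw [abs_of_nonpos hnonpos, hval]
    linarith [hen]
  rw [habs, hSval] at hbound
  rw [pow_two] at hsmall
  have hmul := mul_lt_mul_of_pos_left hsmall hω2
  linarith [hbound, hmul, hω2]
end

section
/- Let 0 < λ ≤ Λ, set ω = Λ/λ and α = π/2, let γ > 0, and define u_Z(x,y,z) = γ(cos x + cos y) − √ω·sin((z−α)/√ω). Suppose 0 ≤ x ≤ α, 0 ≤ y ≤ α, (γ/√ω)(cos x + cos y) ≤ 1, and α ≤ z ≤ α + √ω·arcsin((γ/√ω)(cos x + cos y)). Then: (i) −M⁺_{λ,Λ}(Hess u_Z(x,y,z)) = λ·u_Z(x,y,z); (ii) u_Z(x,y,z) > 0 whenever z < α + √ω·arcsin((γ/√ω)(cos x + cos y)); and (iii) u_Z(x,y,z) = 0 when z = α + √ω·arcsin((γ/√ω)(cos x + cos y)). -/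
/-- Partial derivative in the first variable. -/
noncomputable def d1 (u : ℝ → ℝ → ℝ → ℝ) : ℝ → ℝ → ℝ → ℝ :=
  fun x y z => deriv (fun t => u t y z) x

/-- Partial derivative in the second variable. -/
noncomputable def d2 (u : ℝ → ℝ → ℝ → ℝ) : ℝ → ℝ → ℝ → ℝ :=
  fun x y z => deriv (fun t => u x t z) y

/-- Partial derivative in the third variable. -/
noncomputable def d3 (u : ℝ → ℝ → ℝ → ℝ) : ℝ → ℝ → ℝ → ℝ :=
  fun x y z => deriv (fun t => u x y t) z

/-- The Hessian matrix of second partial derivatives of `u : ℝ³ → ℝ`. -/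
noncomputable def hess3 (u : ℝ → ℝ → ℝ → ℝ) (x y z : ℝ) : Matrix (Fin 3) (Fin 3) ℝ :=
  !![d1 (d1 u) x y z, d2 (d1 u) x y z, d3 (d1 u) x y z;
     d1 (d2 u) x y z, d2 (d2 u) x y z, d3 (d2 u) x y z;
     d1 (d3 u) x y z, d2 (d3 u) x y z, d3 (d3 u) x y z]

section Aux

open Polynomial Matrix

/-- Characteristic polynomial is invariant under conjugation by a unit. -/
lemma my_charpoly_conj {n : Type*} [Fintype n] [DecidableEq n]
    (U : (Matrix n n ℝ)ˣ) (A : Matrix n n ℝ) :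
    ((U : Matrix n n ℝ) * A * ((U⁻¹ : (Matrix n n ℝ)ˣ) : Matrix n n ℝ)).charpoly = A.charpoly := by
  have hUU : ((U : Matrix n n ℝ) * ((U⁻¹ : (Matrix n n ℝ)ˣ) : Matrix n n ℝ)) = 1 := U.mul_inv
  have hcm : charmatrix ((U : Matrix n n ℝ) * A * ((U⁻¹ : (Matrix n n ℝ)ˣ) : Matrix n n ℝ))
      = (C : ℝ →+* ℝ[X]).mapMatrix (U : Matrix n n ℝ) * charmatrix A *
        (C : ℝ →+* ℝ[X]).mapMatrix ((U⁻¹ : (Matrix n n ℝ)ˣ) : Matrix n n ℝ) := by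
    simp only [charmatrix, Matrix.mul_sub, Matrix.sub_mul]
    congr 1
    · symm
      rw [scalar_apply, mul_assoc, ← Matrix.smul_eq_diagonal_mul, Matrix.mul_smul,
        ← RingHom.map_mul, hUU, RingHom.map_one, Matrix.smul_eq_diagonal_mul, Matrix.mul_one]
    · rw [← RingHom.map_mul, ← RingHom.map_mul]
  have hdet : (((C : ℝ →+* ℝ[X]).mapMatrix (U : Matrix n n ℝ)).det) *
      (((C : ℝ →+* ℝ[X]).mapMatrix ((U⁻¹ : (Matrix n n ℝ)ˣ) : Matrix n n ℝ)).det) = 1 := by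
    rw [← Matrix.det_mul, ← RingHom.map_mul, hUU, RingHom.map_one, Matrix.det_one]
  unfold Matrix.charpoly
  rw [hcm, Matrix.det_mul, Matrix.det_mul]
  calc _ = (charmatrix A).det * ((C.mapMatrix (U : Matrix n n ℝ)).det *
        ((C : ℝ →+* ℝ[X]).mapMatrix ((U⁻¹ : (Matrix n n ℝ)ˣ) : Matrix n n ℝ)).det) := by ring
  _ = _ := by rw [hdet, mul_one]

lemma my_charpoly_diagonal {n : Type*} [Fintype n] [DecidableEq n] (d : n → ℝ) :
    (Matrix.diagonal d).charpoly = ∏ i, (X - C (d i)) := by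
  have h : charmatrix (Matrix.diagonal d) = Matrix.diagonal (fun i => X - C (d i)) := by
    ext i j
    by_cases h : i = j
    · subst h; simp
    · simp [h, Matrix.diagonal_apply_ne _ h]
  rw [Matrix.charpoly, h, Matrix.det_diagonal]

lemma my_eig_charpoly {n : Type*} [Fintype n] [DecidableEq n] {A : Matrix n n ℝ}
    (hA : A.IsHermitian) : A.charpoly = ∏ i, (X - C (hA.eigenvalues i)) := by
  set U : Matrix n n ℝ := (Matrix.IsHermitian.eigenvectorUnitary hA : Matrix n n ℝ) with hUdef
  have h1 : U * star U = 1 := (Matrix.mem_unitaryGroup_iff).mp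
    (Matrix.IsHermitian.eigenvectorUnitary hA).2
  have h2 : star U * U = 1 := (Matrix.mem_unitaryGroup_iff').mp
    (Matrix.IsHermitian.eigenvectorUnitary hA).2
  set Uu : (Matrix n n ℝ)ˣ := ⟨U, star U, h1, h2⟩ with hUu
  have hinv : ((Uu⁻¹ : (Matrix n n ℝ)ˣ) : Matrix n n ℝ) = star U := rfl
  have hspec : A = (Uu : Matrix n n ℝ) * Matrix.diagonal hA.eigenvalues *
      ((Uu⁻¹ : (Matrix n n ℝ)ˣ) : Matrix n n ℝ) := by
    rw [hinv]
    have := hA.spectral_theorem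
    simpa using this
  have hc := congrArg Matrix.charpoly hspec
  rw [hc, my_charpoly_conj, my_charpoly_diagonal]

lemma my_eig_multiset {n : Type*} [Fintype n] [DecidableEq n] {A : Matrix n n ℝ}
    (hA : A.IsHermitian) :
    Finset.univ.val.map hA.eigenvalues = A.charpoly.roots := by
  rw [my_eig_charpoly hA]
  have : (∏ i, (X - C (hA.eigenvalues i))) =
      ((Finset.univ.val.map hA.eigenvalues).map fun a => X - C a).prod := by
    rw [Multiset.map_map]; rfl
  rw [this, Polynomial.roots_multiset_prod_X_sub_C]

lemma pucci_diagonal (lam Lam : ℝ) {n : Type*} [Fintype n] [DecidableEq n] (d : n → ℝ) :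
    pucci lam Lam (Matrix.diagonal d) =
      ∑ i, (Lam * max (d i) 0 + lam * min (d i) 0) := by
  have hH : (Matrix.diagonal d).IsHermitian := Matrix.isHermitian_diagonal d
  rw [pucci, dif_pos hH]
  have hms : Finset.univ.val.map hH.eigenvalues = Finset.univ.val.map d := by
    rw [my_eig_multiset hH, my_charpoly_diagonal]
    have : (∏ i, (X - C (d i))) = ((Finset.univ.val.map d).map fun a => X - C a).prod := by
      rw [Multiset.map_map]; rfl
    rw [this, Polynomial.roots_multiset_prod_X_sub_C]
  set f : ℝ → ℝ := fun e => Lam * max e 0 + lam * min e 0 with hf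
  calc (∑ i, f (hH.eigenvalues i)) = ((Finset.univ.val.map hH.eigenvalues).map f).sum := by
        rw [Multiset.map_map]; rfl
  _ = ((Finset.univ.val.map d).map f).sum := by rw [hms]
  _ = ∑ i, f (d i) := by rw [Multiset.map_map]; rfl

/-- The Hessian of the Z-cap function is diagonal. -/
lemma hessZ (γ α s : ℝ) (hs : 0 < s) (x y z : ℝ) :
    hess3 (fun x y z => γ * (Real.cos x + Real.cos y) - s * Real.sin ((z - α) / s)) x y z
      = Matrix.diagonal ![-(γ * Real.cos x), -(γ * Real.cos y),
          Real.sin ((z - α) / s) * (1 / s)] := by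
  have hsne : s ≠ 0 := ne_of_gt hs
  set u : ℝ → ℝ → ℝ → ℝ :=
    fun x y z => γ * (Real.cos x + Real.cos y) - s * Real.sin ((z - α) / s) with hu
  have hd1 : d1 u = fun x _ _ => -(γ * Real.sin x) := by
    funext a b c
    have : HasDerivAt (fun t => u t b c) (γ * (-Real.sin a)) a := by
      exact (((Real.hasDerivAt_cos a).add_const (Real.cos b)).const_mul γ).sub_const _
    simpa [d1, mul_neg] using this.deriv
  have hd2 : d2 u = fun _ y _ => -(γ * Real.sin y) := by
    funext a b c
    have : HasDerivAt (fun t => u a t c) (γ * (-Real.sin b)) b := by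
      have h1 : HasDerivAt (fun t => Real.cos a + Real.cos t) (-Real.sin b) b :=
        (Real.hasDerivAt_cos b).const_add (Real.cos a)
      exact (h1.const_mul γ).sub_const _
    simpa [d2, mul_neg] using this.deriv
  have hinner : ∀ t : ℝ, HasDerivAt (fun w => (w - α) / s) (1 / s) t := fun t =>
    ((hasDerivAt_id t).sub_const α).div_const s
  have hd3 : d3 u = fun _ _ z => -(Real.cos ((z - α) / s)) := by
    funext a b c
    have h1 : HasDerivAt (fun t => Real.sin ((t - α) / s))
        (Real.cos ((c - α) / s) * (1 / s)) c :=
      (Real.hasDerivAt_sin _).comp c (hinner c)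
    have h2 : HasDerivAt (fun t => u a b t)
        (-(s * (Real.cos ((c - α) / s) * (1 / s)))) c := (h1.const_mul s).const_sub _
    have : s * (Real.cos ((c - α) / s) * (1 / s)) = Real.cos ((c - α) / s) := by
      field_simp
    rw [this] at h2
    simpa [d3] using h2.deriv
  have e00 : d1 (d1 u) x y z = -(γ * Real.cos x) := by
    rw [hd1]
    have : HasDerivAt (fun t : ℝ => -(γ * Real.sin t)) (-(γ * Real.cos x)) x :=
      ((Real.hasDerivAt_sin x).const_mul γ).neg
    simpa [d1] using this.deriv
  have e11 : d2 (d2 u) x y z = -(γ * Real.cos y) := by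
    rw [hd2]
    have : HasDerivAt (fun t : ℝ => -(γ * Real.sin t)) (-(γ * Real.cos y)) y :=
      ((Real.hasDerivAt_sin y).const_mul γ).neg
    simpa [d2] using this.deriv
  have e22 : d3 (d3 u) x y z = Real.sin ((z - α) / s) * (1 / s) := by
    rw [hd3]
    have : HasDerivAt (fun t : ℝ => -(Real.cos ((t - α) / s)))
        (Real.sin ((z - α) / s) * (1 / s)) z := by
      have := ((Real.hasDerivAt_cos ((z - α) / s)).comp z (hinner z)).neg
      simpa [Function.comp_def, Pi.neg_def] using this
    simpa [d3] using this.deriv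
  have e01 : d2 (d1 u) x y z = 0 := by rw [hd1]; simp [d2]
  have e02 : d3 (d1 u) x y z = 0 := by rw [hd1]; simp [d3]
  have e10 : d1 (d2 u) x y z = 0 := by rw [hd2]; simp [d1]
  have e12 : d3 (d2 u) x y z = 0 := by rw [hd2]; simp [d3]
  have e20 : d1 (d3 u) x y z = 0 := by rw [hd3]; simp [d1]
  have e21 : d2 (d3 u) x y z = 0 := by rw [hd3]; simp [d2]
  rw [hess3, e00, e01, e02, e10, e11, e12, e20, e21, e22]
  ext i j
  fin_cases i <;> fin_cases j <;> simp [Matrix.diagonal, Matrix.vecHead, Matrix.vecTail]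

end Aux

/-- The Z-cap: `u_Z(x,y,z) = γ(cos x + cos y) − √ω·sin((z−α)/√ω)` satisfies
`−M⁺(Hess u_Z) = λ·u_Z` on the cap, is positive below the outer boundary and
vanishes on it. -/
theorem z_cap_eigen (lam Lam γ : ℝ) (hlam : 0 < lam) (hLam : lam ≤ Lam) (hγ : 0 < γ)
    (ω α : ℝ) (hω : ω = Lam / lam) (hα : α = Real.pi / 2) (x y z : ℝ)
    (hx : 0 ≤ x ∧ x ≤ α) (hy : 0 ≤ y ∧ y ≤ α)
    (harg : γ / Real.sqrt ω * (Real.cos x + Real.cos y) ≤ 1)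
    (hz : α ≤ z ∧
      z ≤ α + Real.sqrt ω * Real.arcsin (γ / Real.sqrt ω * (Real.cos x + Real.cos y))) :
    (-pucci lam Lam
        (hess3 (fun x y z =>
          γ * (Real.cos x + Real.cos y) -
            Real.sqrt ω * Real.sin ((z - α) / Real.sqrt ω)) x y z) =
      lam * (γ * (Real.cos x + Real.cos y) -
        Real.sqrt ω * Real.sin ((z - α) / Real.sqrt ω))) ∧
    (z < α + Real.sqrt ω * Real.arcsin (γ / Real.sqrt ω * (Real.cos x + Real.cos y)) →
      0 < γ * (Real.cos x + Real.cos y) -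
        Real.sqrt ω * Real.sin ((z - α) / Real.sqrt ω)) ∧
    (z = α + Real.sqrt ω * Real.arcsin (γ / Real.sqrt ω * (Real.cos x + Real.cos y)) →
      γ * (Real.cos x + Real.cos y) -
        Real.sqrt ω * Real.sin ((z - α) / Real.sqrt ω) = 0) := by
  have hπ := Real.pi_pos
  have hω0 : 0 < ω := by
    rw [hω]; exact div_pos (lt_of_lt_of_le hlam hLam) hlam
  set s : ℝ := Real.sqrt ω with hsdef
  have hs : 0 < s := Real.sqrt_pos.mpr hω0
  have hsne : s ≠ 0 := ne_of_gt hs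
  have hs2 : s * s = ω := Real.mul_self_sqrt hω0.le
  have hcx : 0 ≤ Real.cos x :=
    Real.cos_nonneg_of_mem_Icc ⟨by linarith [hx.1], by linarith [hx.2, hα.ge]⟩
  have hcy : 0 ≤ Real.cos y :=
    Real.cos_nonneg_of_mem_Icc ⟨by linarith [hy.1], by linarith [hy.2, hα.ge]⟩
  set k : ℝ := γ / s * (Real.cos x + Real.cos y) with hkdef
  have hk0 : 0 ≤ k := by
    apply mul_nonneg (div_nonneg hγ.le hs.le) (by linarith)
  have hk1 : k ≤ 1 := harg
  set θ : ℝ := (z - α) / s with hθdef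
  have hθ0 : 0 ≤ θ := div_nonneg (by linarith [hz.1]) hs.le
  have hθk : θ ≤ Real.arcsin k := by
    rw [hθdef, div_le_iff₀ hs]
    have := hz.2
    linarith [mul_comm s (Real.arcsin k)]
  have hθhalf : θ ≤ Real.pi / 2 := hθk.trans (Real.arcsin_le_pi_div_two k)
  have hsinθ : 0 ≤ Real.sin θ :=
    Real.sin_nonneg_of_nonneg_of_le_pi hθ0 (by linarith)
  have hsk : s * k = γ * (Real.cos x + Real.cos y) := by
    rw [hkdef]; field_simp
  refine ⟨?_, ?_, ?_⟩
  · rw [hessZ γ α s hs x y z, pucci_diagonal, Fin.sum_univ_three]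
    simp only [Matrix.cons_val_zero, Matrix.cons_val_one, Matrix.head_cons,
      Matrix.cons_val_two, Matrix.tail_cons]
    have ha : -(γ * Real.cos x) ≤ 0 := neg_nonpos.mpr (mul_nonneg hγ.le hcx)
    have hb : -(γ * Real.cos y) ≤ 0 := neg_nonpos.mpr (mul_nonneg hγ.le hcy)
    have hc : 0 ≤ Real.sin ((z - α) / s) * (1 / s) :=
      mul_nonneg hsinθ (by positivity)
    rw [max_eq_right ha, min_eq_left ha, max_eq_right hb, min_eq_left hb,
      max_eq_left hc, min_eq_right hc]
    have hΛ : Lam = lam * (s * s) := by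
      rw [hs2, hω]; field_simp
    rw [hΛ]
    field_simp
    ring
  · intro hlt
    have hθlt : θ < Real.arcsin k := by
      rw [hθdef, div_lt_iff₀ hs]
      linarith [mul_comm s (Real.arcsin k)]
    have hsinlt : Real.sin θ < k := by
      have := Real.strictMonoOn_sin
        (Set.mem_Icc.mpr ⟨by linarith, hθhalf⟩)
        (Set.mem_Icc.mpr ⟨Real.neg_pi_div_two_le_arcsin k, Real.arcsin_le_pi_div_two k⟩)
        hθlt
      rwa [Real.sin_arcsin (by linarith) hk1] at this
    have h1 : 0 < s * (k - Real.sin θ) := mul_pos hs (by linarith)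
    rw [mul_sub] at h1
    rw [← hsk]
    show 0 < s * k - s * Real.sin θ
    linarith
  · intro heq
    have hθeq : θ = Real.arcsin k := by
      rw [hθdef, heq]; field_simp; ring
    show γ * (Real.cos x + Real.cos y) - s * Real.sin θ = 0
    rw [hθeq, Real.sin_arcsin (by linarith) hk1, ← hsk]
    ring
end

section
/- Let 0 < λ ≤ Λ, let a ∈ ℝ with |a| < π, and let p, q, r ∈ ℝ. Set κ² = π²/(π²−a²), and let M_a(p,q,r) be the real symmetric 3×3 matrix whose upper-left 2×2 block has entries (π²/(π²−a²))·p + (a²/(π²−a²))·q, −(a/√(π²−a²))·q (off-diagonal), q, whose (3,3) entry is κ²·r, and whose remaining entries vanish. Then M⁺_{λ,Λ}(M_a(p,q,r)) ≤ κ² · M⁺_{λ,Λ}(diag(p,q,r)), where diag(p,q,r) is the diagonal matrix with entries p, q, r. (This is the pointwise Hessian inequality underlying the spectral lower bound −M⁺(D²u_{γ,a}) ≥ (λπ²/(π²−a²))·u_{γ,a} under shear.) -/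
set_option maxHeartbeats 1000000
open Polynomial Matrix

/-- The sheared Hessian matrix `M_a(p,q,r)`. -/
noncomputable def shearedHessian (a p q r : ℝ) : Matrix (Fin 3) (Fin 3) ℝ :=
  !![Real.pi ^ 2 / (Real.pi ^ 2 - a ^ 2) * p + a ^ 2 / (Real.pi ^ 2 - a ^ 2) * q,
      -(a / Real.sqrt (Real.pi ^ 2 - a ^ 2)) * q, 0;
     -(a / Real.sqrt (Real.pi ^ 2 - a ^ 2)) * q, q, 0;
     0, 0, Real.pi ^ 2 / (Real.pi ^ 2 - a ^ 2) * r]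

lemma charpoly_conj_units {n : Type*} [Fintype n] [DecidableEq n]
    (U D V : Matrix n n ℝ) (h1 : U * V = 1) :
    (U * D * V).charpoly = D.charpoly := by
  have hC : ∀ M N : Matrix n n ℝ, (M * N).map (C : ℝ →+* ℝ[X]) = M.map C * N.map C := by
    intro M N; exact Matrix.map_mul
  have hUV : U.map (C : ℝ →+* ℝ[X]) * V.map C = 1 := by
    rw [← hC, h1]; simp
  have key : charmatrix (U * D * V) = U.map C * charmatrix D * V.map C := by
    rw [charmatrix, charmatrix, Matrix.mul_sub, Matrix.sub_mul]
    congr 1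
    · have comm : U.map (C : ℝ →+* ℝ[X]) * Matrix.scalar n (X : ℝ[X]) =
          Matrix.scalar n (X : ℝ[X]) * U.map C :=
        ((Matrix.scalar_commute (X : ℝ[X]) (fun r' => Commute.all _ _) _)).symm
      rw [comm, mul_assoc, hUV, mul_one]
    · show C.mapMatrix (U * D * V) = U.map C * C.mapMatrix D * V.map C
      rw [RingHom.mapMatrix_apply, RingHom.mapMatrix_apply, ← hC, ← hC]
  rw [Matrix.charpoly, Matrix.charpoly, key, Matrix.det_mul, Matrix.det_mul]
  have : det (U.map (C : ℝ →+* ℝ[X])) * det (V.map C) = 1 := by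
    rw [← Matrix.det_mul, hUV, Matrix.det_one]
  calc det (U.map (C : ℝ →+* ℝ[X])) * det (charmatrix D) * det (V.map C)
      = det (U.map (C : ℝ →+* ℝ[X])) * det (V.map C) * det (charmatrix D) := by ring
    _ = det (charmatrix D) := by rw [this, one_mul]

lemma charmatrix_diagonal' {n : Type*} [Fintype n] [DecidableEq n] (d : n → ℝ) :
    charmatrix (Matrix.diagonal d) = Matrix.diagonal (fun i => (X : ℝ[X]) - C (d i)) := by
  ext i j
  by_cases h : i = j
  · subst h; simp [charmatrix_apply_eq]
  · rw [charmatrix_apply_ne _ _ _ h, Matrix.diagonal_apply_ne _ h, Matrix.diagonal_apply_ne _ h]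
    simp

lemma charpoly_hermitian {n : Type*} [Fintype n] [DecidableEq n]
    (A : Matrix n n ℝ) (hA : A.IsHermitian) :
    A.charpoly = ∏ i, (X - C (hA.eigenvalues i)) := by
  have hst := hA.spectral_theorem
  have hdiag : Matrix.diagonal ((RCLike.ofReal : ℝ → ℝ) ∘ hA.eigenvalues)
      = Matrix.diagonal hA.eigenvalues := by congr 1
  have h1 : (hA.eigenvectorUnitary : Matrix n n ℝ) *
      star (hA.eigenvectorUnitary : Matrix n n ℝ) = 1 :=
    (Matrix.mem_unitaryGroup_iff).mp hA.eigenvectorUnitary.2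
  have := charpoly_conj_units (hA.eigenvectorUnitary : Matrix n n ℝ)
    (Matrix.diagonal hA.eigenvalues) (star (hA.eigenvectorUnitary : Matrix n n ℝ)) h1
  rw [hdiag, Unitary.conjStarAlgAut_apply] at hst
  rw [← hst] at this
  rw [this, Matrix.charpoly, charmatrix_diagonal', Matrix.det_diagonal]

lemma eigs_sum {A : Matrix (Fin 3) (Fin 3) ℝ} (hA : A.IsHermitian) (e₁ e₂ e₃ : ℝ)
    (h : A.charpoly = (X - C e₁) * ((X - C e₂) * (X - C e₃))) (f : ℝ → ℝ) :
    ∑ i, f (hA.eigenvalues i) = f e₁ + (f e₂ + f e₃) := by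
  have h2 := charpoly_hermitian A hA
  have hl : A.charpoly = (Multiset.map (fun a => (X : ℝ[X]) - C a)
      (Multiset.map hA.eigenvalues Finset.univ.val)).prod := by
    rw [h2, Multiset.map_map]; rfl
  have hr : A.charpoly = (Multiset.map (fun a => (X : ℝ[X]) - C a)
      ({e₁, e₂, e₃} : Multiset ℝ)).prod := by
    rw [h]; simp [mul_assoc]
  have hm : Multiset.map hA.eigenvalues Finset.univ.val = ({e₁, e₂, e₃} : Multiset ℝ) := by
    rw [← Polynomial.roots_multiset_prod_X_sub_C (Multiset.map hA.eigenvalues Finset.univ.val),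
      ← Polynomial.roots_multiset_prod_X_sub_C ({e₁, e₂, e₃} : Multiset ℝ), ← hl, ← hr]
  have hsum : ∑ i, f (hA.eigenvalues i) =
      (Multiset.map f (Multiset.map hA.eigenvalues Finset.univ.val)).sum := by
    rw [Multiset.map_map]; rfl
  rw [hsum, hm]
  simp [add_assoc]

lemma charpoly_diag3 (p q r : ℝ) :
    (Matrix.diagonal ![p, q, r]).charpoly = (X - C p) * ((X - C q) * (X - C r)) := by
  rw [Matrix.charpoly, charmatrix_diagonal', Matrix.det_diagonal, Fin.prod_univ_three]
  simp [mul_assoc]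

lemma charpoly_block (A00 b q c μ₁ μ₂ : ℝ) (h1 : μ₁ + μ₂ = A00 + q)
    (h2 : μ₁ * μ₂ = A00 * q - b ^ 2) :
    (!![A00, b, 0; b, q, 0; 0, 0, c] : Matrix (Fin 3) (Fin 3) ℝ).charpoly
      = (X - C μ₁) * ((X - C μ₂) * (X - C c)) := by
  have e1 : C μ₁ + C μ₂ = C A00 + C q := by rw [← C_add, ← C_add, h1]
  have e2 : C μ₁ * C μ₂ = C A00 * C q - C b * C b := by
    rw [← C_mul, h2]; rw [map_sub, C_mul, C_pow]; ring
  rw [Matrix.charpoly, Matrix.det_fin_three]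
  simp [charmatrix_apply, Matrix.diagonal_apply]
  linear_combination (X - C c) * X * e1 - (X - C c) * e2

lemma herm_block (A00 b q c : ℝ) :
    (!![A00, b, 0; b, q, 0; 0, 0, c] : Matrix (Fin 3) (Fin 3) ℝ).IsHermitian := by
  show _ᴴ = _
  ext i j
  fin_cases i <;> fin_cases j <;> simp [Matrix.conjTranspose_apply]

/-- Pointwise Hessian inequality under shear:
`M⁺_{λ,Λ}(M_a(p,q,r)) ≤ κ²·M⁺_{λ,Λ}(diag(p,q,r))` with `κ² = π²/(π²−a²)`. -/
theorem pucci_sheared_le (lam Lam a p q r : ℝ) (hlam : 0 < lam) (hLam : lam ≤ Lam)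
    (ha : |a| < Real.pi) :
    pucci lam Lam (shearedHessian a p q r) ≤
      Real.pi ^ 2 / (Real.pi ^ 2 - a ^ 2) *
        pucci lam Lam (Matrix.diagonal ![p, q, r]) := by
  have hpos : 0 < Real.pi ^ 2 - a ^ 2 := by
    have h1 : a ^ 2 < Real.pi ^ 2 := by
      have := abs_nonneg a
      nlinarith [sq_abs a]
    linarith
  set k : ℝ := Real.pi ^ 2 / (Real.pi ^ 2 - a ^ 2) with hk
  have hk1 : 1 ≤ k := by
    rw [hk, le_div_iff₀ hpos]
    nlinarith [sq_nonneg a]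
  have hk0 : 0 < k := lt_of_lt_of_le one_pos hk1
  -- description of the sheared matrix
  set A00 : ℝ := k * p + a ^ 2 / (Real.pi ^ 2 - a ^ 2) * q with hA00
  set b : ℝ := -(a / Real.sqrt (Real.pi ^ 2 - a ^ 2)) * q with hb
  have hM : shearedHessian a p q r = !![A00, b, 0; b, q, 0; 0, 0, k * r] := rfl
  have hb2 : b ^ 2 = a ^ 2 / (Real.pi ^ 2 - a ^ 2) * q ^ 2 := by
    rw [hb, show (-(a / Real.sqrt (Real.pi ^ 2 - a ^ 2)) * q) ^ 2
      = a ^ 2 / (Real.sqrt (Real.pi ^ 2 - a ^ 2)) ^ 2 * q ^ 2 by ring,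
      Real.sq_sqrt hpos.le]
  have hAq : A00 + q = k * (p + q) := by
    rw [hA00, hk]
    field_simp
    ring
  have hAqq : A00 * q - b ^ 2 = k * (p * q) := by
    rw [hA00, hb2, hk]
    field_simp
    ring
  -- the eigenvalues of the 2x2 block
  set S : ℝ := k * (p + q) with hS
  set D : ℝ := k * (p * q) with hD
  have hdisc : 0 ≤ S ^ 2 - 4 * D := by
    rw [hS, hD]
    nlinarith [mul_nonneg (mul_nonneg hk0.le (sub_nonneg.2 hk1)) (sq_nonneg (p + q)),
      mul_nonneg hk0.le (sq_nonneg (p - q))]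
  set d : ℝ := Real.sqrt (S ^ 2 - 4 * D) with hdd
  have hd0 : 0 ≤ d := Real.sqrt_nonneg _
  have hd2 : d ^ 2 = S ^ 2 - 4 * D := Real.sq_sqrt hdisc
  set μ₁ : ℝ := (S + d) / 2 with hμ₁
  set μ₂ : ℝ := (S - d) / 2 with hμ₂
  have h1 : μ₁ + μ₂ = A00 + q := by rw [hμ₁, hμ₂, hAq]; ring
  have h2 : μ₁ * μ₂ = A00 * q - b ^ 2 := by
    rw [hμ₁, hμ₂, hAqq]
    have : (S + d) / 2 * ((S - d) / 2) = (S ^ 2 - d ^ 2) / 4 := by ring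
    rw [this, hd2]; ring
  -- compute the two pucci values
  have hH1 : (shearedHessian a p q r).IsHermitian := by rw [hM]; exact herm_block _ _ _ _
  have hH2 : (Matrix.diagonal ![p, q, r]).IsHermitian := Matrix.isHermitian_diagonal _
  set f : ℝ → ℝ := fun t => Lam * max t 0 + lam * min t 0 with hf
  have hcp1 : (shearedHessian a p q r).charpoly
      = (X - C μ₁) * ((X - C μ₂) * (X - C (k * r))) := by
    rw [hM]; exact charpoly_block A00 b q (k * r) μ₁ μ₂ h1 h2
  have hcp2 := charpoly_diag3 p q r
  have hp1 : pucci lam Lam (shearedHessian a p q r) = f μ₁ + (f μ₂ + f (k * r)) := by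
    rw [pucci, dif_pos hH1]
    exact eigs_sum hH1 μ₁ μ₂ (k * r) hcp1 f
  have hp2 : pucci lam Lam (Matrix.diagonal ![p, q, r]) = f p + (f q + f r) := by
    rw [pucci, dif_pos hH2]
    exact eigs_sum hH2 p q r hcp2 f
  rw [hp1, hp2]
  -- the formula f t = ((Lam+lam)*t + (Lam-lam)*|t|)/2
  have hfabs : ∀ t : ℝ, f t = ((Lam + lam) * t + (Lam - lam) * |t|) / 2 := by
    intro t
    rcases le_total t 0 with h | h
    · rw [hf]; simp only
      rw [max_eq_right h, min_eq_left h, abs_of_nonpos h]; ring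
    · rw [hf]; simp only
      rw [max_eq_left h, min_eq_right h, abs_of_nonneg h]; ring
  -- homogeneity: f (k*r) = k * f r
  have hfk : f (k * r) = k * f r := by
    rw [hfabs, hfabs, abs_mul, abs_of_pos hk0]; ring
  -- key inequality: |μ₁| + |μ₂| ≤ k * (|p| + |q|)
  have hSabs : |S| ≤ k * (|p| + |q|) := by
    rw [hS, abs_mul, abs_of_pos hk0]
    exact mul_le_mul_of_nonneg_left (abs_add_le p q) hk0.le
  have hpq1 : p * q ≤ |p| * |q| := by rw [← abs_mul]; exact le_abs_self _
  have hpq2 : -(p * q) ≤ |p| * |q| := by rw [← abs_mul]; exact neg_le_abs _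
  have hdle : d ≤ k * (|p| + |q|) := by
    have hnn : 0 ≤ k * (|p| + |q|) := by positivity
    rw [hdd, show k * (|p| + |q|) = Real.sqrt ((k * (|p| + |q|)) ^ 2) from
      (Real.sqrt_sq hnn).symm]
    apply Real.sqrt_le_sqrt
    rw [hS, hD]
    have t1 : 0 ≤ (k ^ 2 - k) * (|p| * |q| - p * q) :=
      mul_nonneg (by nlinarith) (by linarith)
    have t2 : 0 ≤ k * (|p| * |q| + p * q) := mul_nonneg hk0.le (by linarith)
    nlinarith [t1, t2, sq_abs p, sq_abs q]
  have habs : |μ₁| + |μ₂| ≤ k * (|p| + |q|) := by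
    have hS' := abs_le.1 hSabs
    rcases abs_cases μ₁ with ⟨e1, _⟩ | ⟨e1, _⟩ <;>
      rcases abs_cases μ₂ with ⟨e2, _⟩ | ⟨e2, _⟩ <;>
      rw [e1, e2] <;> linarith [hS'.1, hS'.2, hμ₁, hμ₂]
  have hsum : μ₁ + μ₂ = k * (p + q) := by rw [h1, hAq]
  have hsum' : (Lam + lam) * (μ₁ + μ₂) = (Lam + lam) * (k * (p + q)) := by rw [hsum]
  have hkey := mul_le_mul_of_nonneg_left habs (by linarith : (0 : ℝ) ≤ Lam - lam)
  rw [hfk, hfabs μ₁, hfabs μ₂, hfabs p, hfabs q]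
  nlinarith [hkey, hsum']
end
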